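/- For k ≥ 1 and φ ∈ ℝ, the multi-controlled phase unitary U_{k,φ} = I + (e^{iφ}−1)|1^k⟩⟨1^k| on k qubits has Pauli ℓ1-norm at most 3. Specifically, its Pauli coefficients are α_∅ = 1 + (e^{iφ}−1)/2^k for the identity string and α_{Z_S} = (e^{iφ}−1)(−1)^{|S|}/2^k for each nonempty S ⊆ [k], giving ‖U_{k,φ}‖_{1,P} = |1 + (e^{iφ}−1)2^{−k}| + (2^k−1)|e^{iφ}−1|2^{−k} ≤ 1 + |e^{iφ}−1| ≤ 3. -/

import Mathlib

open Matrix BigOperators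
open scoped Kronecker ComplexOrder

noncomputable def pauli1 : Fin 4 → Matrix (Fin 2) (Fin 2) ℂ
  | 0 => 1
  | 1 => !![0, 1; 1, 0]
  | 2 => !![0, -Complex.I; Complex.I, 0]
  | 3 => !![1, 0; 0, -1]

/-- The n-qubit Pauli operator indexed by `s : Fin n → Fin 4`, realized as the
tensor product of single-qubit Pauli matrices (entrywise product formula). -/
noncomputable def pauli {n : ℕ} (s : Fin n → Fin 4) :
    Matrix (Fin n → Fin 2) (Fin n → Fin 2) ℂ :=
  Matrix.of fun i j => ∏ k, pauli1 (s k) (i k) (j k)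

/-- The Pauli coefficient `α_s = 2^{-n} Tr(A σ^s)`. -/
noncomputable def pauliCoeff {n : ℕ} (A : Matrix (Fin n → Fin 2) (Fin n → Fin 2) ℂ)
    (s : Fin n → Fin 4) : ℂ :=
  (A * pauli s).trace / 2 ^ n

/-- Operator norm (largest singular value) of a matrix. -/
noncomputable def opNorm {m : Type*} [Fintype m] [DecidableEq m]
    (A : Matrix m m ℂ) : ℝ :=
  ‖Matrix.toEuclideanCLM (𝕜 := ℂ) A‖

/-- Trace norm `‖A‖₁ = Tr √(AᴴA)`. -/
noncomputable def traceNorm {m : Type*} [Fintype m] [DecidableEq m]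
    (A : Matrix m m ℂ) : ℝ :=
    (((Matrix.posSemidef_conjTranspose_mul_self A).1.eigenvectorUnitary.1 *
      diagonal (((↑) : ℝ → ℂ) ∘ Real.sqrt ∘ (Matrix.posSemidef_conjTranspose_mul_self A).1.eigenvalues) *
      (star (Matrix.posSemidef_conjTranspose_mul_self A).1.eigenvectorUnitary : Matrix m m ℂ)).trace).re

lemma pauli1_diag_sum (a : Fin 4) : pauli1 a 0 0 + pauli1 a 1 1 = if a = 0 then 2 else 0 := by
  fin_cases a <;> simp [pauli1, Matrix.one_apply] <;> norm_num

lemma pauli1_one_one (a : Fin 4) :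
    pauli1 a 1 1 = if a = 0 then 1 else if a = 3 then -1 else 0 := by
  fin_cases a <;> simp [pauli1, Matrix.one_apply]

lemma trace_pauli {k : ℕ} (s : Fin k → Fin 4) :
    (pauli s).trace = if s = fun _ => 0 then (2:ℂ)^k else 0 := by
  have : (pauli s).trace = ∑ i : Fin k → Fin 2, ∏ j, pauli1 (s j) (i j) (i j) := rfl
  rw [this, ← Fintype.prod_sum fun j a => pauli1 (s j) a a]
  by_cases h : s = fun _ => 0
  · subst h; simp [pauli1_diag_sum]
  · rw [if_neg h]
    obtain ⟨j, hj⟩ := Function.ne_iff.mp h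
    exact Finset.prod_eq_zero (Finset.mem_univ j) (by simp [pauli1_diag_sum, hj])

lemma pauli_one_one {k : ℕ} (s : Fin k → Fin 4) :
    pauli s (fun _ => 1) (fun _ => 1) =
      if ∀ j, s j = 0 ∨ s j = 3 then
        (-1 : ℂ) ^ ((Finset.univ.filter fun j => s j = 3).card) else 0 := by
  have : pauli s (fun _ => 1) (fun _ => 1) = ∏ j, pauli1 (s j) 1 1 := rfl
  rw [this]
  by_cases h : ∀ j, s j = 0 ∨ s j = 3
  · rw [if_pos h]
    have : ∀ j, pauli1 (s j) 1 1 = if s j = 3 then (-1 : ℂ) else 1 := by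
      intro j; rcases h j with h' | h' <;> simp [pauli1_one_one, h']
    rw [Finset.prod_congr rfl (fun j _ => this j), Finset.prod_ite, Finset.prod_const,
      Finset.prod_const, one_pow, mul_one]
  · rw [if_neg h]
    push_neg at h
    obtain ⟨j, hj0, hj3⟩ := h
    exact Finset.prod_eq_zero (Finset.mem_univ j) (by simp [pauli1_one_one, hj0, hj3])

lemma trace_std_mul {k : ℕ} (M : Matrix (Fin k → Fin 2) (Fin k → Fin 2) ℂ) :
    (Matrix.single (fun _ => (1:Fin 2)) (fun _ => 1) (1:ℂ) * M).trace
      = M (fun _ => 1) (fun _ => 1) := by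
  rw [Matrix.trace]
  rw [Finset.sum_eq_single (fun _ => (1:Fin 2))]
  · simp [Matrix.diag, Matrix.single_mul_apply_same]
  · intro b _ hb
    exact Matrix.single_mul_apply_of_ne (c := (1:ℂ)) _ _ b b hb M
  · simp

/-- The multi-controlled phase unitary
`U_{k,φ} = I + (e^{iφ}−1)|1^k⟩⟨1^k|` has the stated Pauli coefficients and
Pauli ℓ1-norm at most `3`. -/
theorem multi_controlled_phase_pauli_l1 (k : ℕ) (hk : 1 ≤ k) (φ : ℝ) :
    ∀ (e : ℂ), e = Complex.exp (Complex.I * φ) →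
    ∀ (U : Matrix (Fin k → Fin 2) (Fin k → Fin 2) ℂ),
      U = 1 + (e - 1) • Matrix.single (fun _ => 1) (fun _ => 1) (1 : ℂ) →
      (∀ s : Fin k → Fin 4,
        pauliCoeff U s =
          if ∀ j, s j = 0 ∨ s j = 3 then
            (if s = fun _ => 0 then 1 + (e - 1) / 2 ^ k
             else (e - 1) * (-1) ^ ((Finset.univ.filter fun j => s j = 3).card) / 2 ^ k)
          else 0) ∧
      (∑ s : Fin k → Fin 4, ‖pauliCoeff U s‖)
          = ‖1 + (e - 1) / 2 ^ k‖
            + (2 ^ k - 1) * ‖e - 1‖ / 2 ^ k ∧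
      ‖1 + (e - 1) / 2 ^ k‖
            + (2 ^ k - 1) * ‖e - 1‖ / 2 ^ k
          ≤ 1 + ‖e - 1‖ ∧
      (1 : ℝ) + ‖e - 1‖ ≤ 3 := by
  intro e he U hU
  have h2k : ((2:ℂ)^k) ≠ 0 := by positivity
  have h2kR : (0:ℝ) < 2^k := by positivity
  -- trace formula
  have htr : ∀ s : Fin k → Fin 4, (U * pauli s).trace
      = (if s = fun _ => 0 then (2:ℂ)^k else 0)
        + (e - 1) * (if ∀ j, s j = 0 ∨ s j = 3 then
            (-1 : ℂ) ^ ((Finset.univ.filter fun j => s j = 3).card) else 0) := by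
    intro s
    rw [hU, add_mul, one_mul, Matrix.smul_mul, Matrix.trace_add, Matrix.trace_smul,
      trace_pauli, trace_std_mul, pauli_one_one]
    simp [smul_eq_mul]
  have hcoeff : ∀ s : Fin k → Fin 4,
      pauliCoeff U s =
        if ∀ j, s j = 0 ∨ s j = 3 then
          (if s = fun _ => 0 then 1 + (e - 1) / 2 ^ k
           else (e - 1) * (-1) ^ ((Finset.univ.filter fun j => s j = 3).card) / 2 ^ k)
        else 0 := by
    intro s
    rw [pauliCoeff, htr]
    by_cases h : ∀ j, s j = 0 ∨ s j = 3
    · rw [if_pos h, if_pos h]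
      by_cases hs : s = fun _ => 0
      · rw [if_pos hs, if_pos hs]
        have hcard : (Finset.univ.filter fun j => s j = 3).card = 0 := by
          subst hs; simp
        rw [hcard]
        field_simp
      · rw [if_neg hs, if_neg hs, zero_add]
    · rw [if_neg h, if_neg h]
      have hs : s ≠ fun _ => 0 := by
        push_neg at h
        obtain ⟨j, hj0, _⟩ := h
        intro hc; exact hj0 (by rw [hc])
      rw [if_neg hs]
      simp
  refine ⟨hcoeff, ?_, ?_, ?_⟩
  · -- the sum
    set A := ‖1 + (e - 1) / 2 ^ k‖ with hA
    set B := ‖e - 1‖ / 2 ^ k with hB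
    have habs : ∀ s : Fin k → Fin 4, ‖pauliCoeff U s‖
        = if ∀ j, s j = 0 ∨ s j = 3 then (if s = fun _ => 0 then A else B) else 0 := by
      intro s
      rw [hcoeff s]
      by_cases h : ∀ j, s j = 0 ∨ s j = 3
      · rw [if_pos h, if_pos h]
        by_cases hs : s = fun _ => 0
        · rw [if_pos hs, if_pos hs]
        · rw [if_neg hs, if_neg hs, hB]
          simp [map_div₀, _root_.map_mul, map_pow, Complex.norm_two]
      · rw [if_neg h, if_neg h]; simp
    have hT : (Finset.univ.filter fun s : Fin k → Fin 4 => ∀ j, s j = 0 ∨ s j = 3)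
        = Fintype.piFinset (fun _ : Fin k => ({0, 3} : Finset (Fin 4))) := by
      ext s
      simp [Fintype.mem_piFinset]
    have hcard : (Finset.univ.filter fun s : Fin k → Fin 4 => ∀ j, s j = 0 ∨ s j = 3).card
        = 2 ^ k := by
      rw [hT, Fintype.card_piFinset]
      simp
    have hzmem : (fun _ => (0 : Fin 4)) ∈
        (Finset.univ.filter fun s : Fin k → Fin 4 => ∀ j, s j = 0 ∨ s j = 3) := by
      simp
    calc (∑ s : Fin k → Fin 4, ‖pauliCoeff U s‖)
        = ∑ s ∈ (Finset.univ.filter fun s : Fin k → Fin 4 => ∀ j, s j = 0 ∨ s j = 3),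
            (if s = fun _ => 0 then A else B) := by
          rw [Finset.sum_filter]
          exact Finset.sum_congr rfl fun s _ => habs s
      _ = ∑ s ∈ (Finset.univ.filter fun s : Fin k → Fin 4 => ∀ j, s j = 0 ∨ s j = 3),
            (B + if s = fun _ => 0 then A - B else 0) := by
          refine Finset.sum_congr rfl fun s _ => ?_
          split_ifs <;> ring
      _ = 2 ^ k * B + (A - B) := by
          rw [Finset.sum_add_distrib, Finset.sum_const, Finset.sum_ite_eq', if_pos hzmem,
            hcard]
          simp [mul_comm]
      _ = A + (2 ^ k - 1) * ‖e - 1‖ / 2 ^ k := by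
          rw [hB]; field_simp; ring
  · have h1 : ‖1 + (e - 1) / 2 ^ k‖ ≤ 1 + ‖e - 1‖ / 2 ^ k := by
      calc ‖1 + (e - 1) / 2 ^ k‖
          ≤ ‖(1:ℂ)‖ + ‖(e - 1) / 2 ^ k‖ := norm_add_le _ _
        _ = 1 + ‖e - 1‖ / 2 ^ k := by
            simp [map_div₀, map_pow, Complex.norm_two]
    have h2 : (1:ℝ) + ‖e - 1‖ / 2 ^ k + (2 ^ k - 1) * ‖e - 1‖ / 2 ^ k
        = 1 + ‖e - 1‖ := by
      field_simp; ring
    linarith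
  · have habse : ‖e‖ = 1 := by
      rw [he, Complex.norm_exp]
      simp [Complex.mul_re]
    have : ‖e - 1‖ ≤ ‖e‖ + ‖(1:ℂ)‖ := by
      calc ‖e - 1‖ = ‖e + (-1)‖ := by ring_nf
        _ ≤ ‖e‖ + ‖-1‖ := norm_add_le _ _
        _ = ‖e‖ + ‖(1:ℂ)‖ := by simp
    simp [habse] at this
    linarith
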